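/- Let k be an algebraically closed field of characteristic 2, K a function field of one variable over k, v a place of K, and f, g ∈ H with g pseudo-tame at v. Then the following are equivalent: (1) there exists s ∈ K such that a(f,g) + s² ∈ O_v (i.e. the class of a(f,g) modulo K² is regular at v); (2) f is pseudo-tame at v. -/

import Mathlib

/-- A place of a function field `K` over `k`. -/
structure Place (k K : Type*) [Field k] [Field K] [Algebra k K] where
  v : K → ℤ
  v_mul : ∀ x y : K, x ≠ 0 → y ≠ 0 → v (x * y) = v x + v y
  v_add : ∀ x y : K, x ≠ 0 → y ≠ 0 → x + y ≠ 0 → min (v x) (v y) ≤ v (x + y)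
  v_surj : ∀ n : ℤ, ∃ x : K, x ≠ 0 ∧ v x = n
  v_const : ∀ c : k, c ≠ 0 → v (algebraMap k K c) = 0

/-- `K` is a function field of one variable over `k`. -/
def IsFunctionFieldOneVar (k K : Type*) [Field k] [Field K] [Algebra k K] : Prop :=
  ∃ x : K, Transcendental k x ∧
    FiniteDimensional (IntermediateField.adjoin k ({x} : Set K)) K

/-- `f ∈ H = K \ K²` is pseudo-tame at a place `v`: setting `t := f - c` (`c` the
residue of `f` at `v`) if `v f ≥ 0`, and `t := 1/f` if `v f < 0`, there is `h` in
the valuation ring `O_v` such that `v (t + h⁴)` is odd. -/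
def PseudoTameAt {k K : Type*} [Field k] [Field K] [Algebra k K]
    (P : Place k K) (f : K) : Prop :=
  ∃ t : K,
    ((0 ≤ P.v f ∧ ∃ c : k, t = f - algebraMap k K c ∧ t ≠ 0 ∧ 0 < P.v t) ∨
      (P.v f < 0 ∧ t = f⁻¹)) ∧
    ∃ h : K, (h = 0 ∨ 0 ≤ P.v h) ∧ t + h ^ 4 ≠ 0 ∧ Odd (P.v (t + h ^ 4))

/-- The quantity `a(f,g) = (f₁²·f₃² + f₂⁴)·g / (f₃⁴·g² + f₁⁴)`, where
`f = f₀⁴ + f₁⁴·g + f₂⁴·g² + f₃⁴·g³` is the expansion of `f` with respect to `g`. -/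
noncomputable def aOf {K : Type*} [Field K] (g f₁ f₂ f₃ : K) : K :=
  ((f₁ ^ 2 * f₃ ^ 2 + f₂ ^ 4) * g) / (f₃ ^ 4 * g ^ 2 + f₁ ^ 4)



namespace PT
variable {k K : Type*} [Field k] [Field K] [Algebra k K] (P : Place k K)

theorem v_one : P.v 1 = 0 := by
  have := P.v_mul 1 1 one_ne_zero one_ne_zero
  simpa using this.symm

theorem v_neg_one : P.v (-1) = 0 := by
  have := P.v_mul (-1) (-1) (by norm_num) (by norm_num)
  simp only [neg_mul, one_mul, neg_neg, v_one] at this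
  omega

theorem v_neg (x : K) : P.v (-x) = P.v x := by
  rcases eq_or_ne x 0 with rfl | hx
  · simp
  · have := P.v_mul (-1) x (by norm_num) hx
    simpa [v_neg_one] using this

theorem v_inv {x : K} (hx : x ≠ 0) : P.v x⁻¹ = -P.v x := by
  have := P.v_mul x x⁻¹ hx (inv_ne_zero hx)
  rw [mul_inv_cancel₀ hx, v_one] at this
  omega

theorem v_pow {x : K} (hx : x ≠ 0) (n : ℕ) : P.v (x ^ n) = n * P.v x := by
  induction n with
  | zero => simpa using v_one P
  | succ m ih =>
      rw [pow_succ, P.v_mul _ _ (pow_ne_zero _ hx) hx, ih]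
      push_cast; ring

open Classical in
/-- the valuation with value `⊤` at `0`. -/
noncomputable def V (x : K) : WithTop ℤ := if x = 0 then ⊤ else (P.v x : WithTop ℤ)

@[simp] theorem V_zero : V P (0 : K) = ⊤ := by simp [V]

theorem V_of_ne {x : K} (hx : x ≠ 0) : V P x = (P.v x : WithTop ℤ) := by simp [V, hx]

@[simp] theorem V_eq_top_iff {x : K} : V P x = ⊤ ↔ x = 0 := by
  constructor
  · intro h; by_contra hx; rw [V_of_ne P hx] at h; exact (WithTop.coe_ne_top h)
  · rintro rfl; simp

theorem V_lt_top_iff {x : K} : V P x < ⊤ ↔ x ≠ 0 := by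
  rw [lt_top_iff_ne_top, ne_eq, V_eq_top_iff]

theorem V_mul (x y : K) : V P (x * y) = V P x + V P y := by
  rcases eq_or_ne x 0 with rfl | hx
  · simp
  rcases eq_or_ne y 0 with rfl | hy
  · simp
  rw [V_of_ne P hx, V_of_ne P hy, V_of_ne P (mul_ne_zero hx hy), P.v_mul x y hx hy]
  push_cast; ring

theorem V_neg (x : K) : V P (-x) = V P x := by
  rcases eq_or_ne x 0 with rfl | hx
  · simp
  · rw [V_of_ne P (neg_ne_zero.2 hx), V_of_ne P hx, v_neg]

theorem V_pow (x : K) (n : ℕ) (hn : n ≠ 0) : V P (x ^ n) = (n : ℤ) * V P x := by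
  rcases eq_or_ne x 0 with rfl | hx
  · rw [zero_pow hn]; simp only [V_zero]
    rw [WithTop.mul_top (by exact_mod_cast hn : ((n:ℤ) : WithTop ℤ) ≠ 0)]
  · rw [V_of_ne P hx, V_of_ne P (pow_ne_zero _ hx), v_pow P hx]
    push_cast
    rfl

theorem V_add_ge (x y : K) : min (V P x) (V P y) ≤ V P (x + y) := by
  rcases eq_or_ne x 0 with rfl | hx
  · simp
  rcases eq_or_ne y 0 with rfl | hy
  · simp
  rcases eq_or_ne (x + y) 0 with h | hxy
  · simp [h]
  rw [V_of_ne P hx, V_of_ne P hy, V_of_ne P hxy, ← WithTop.coe_min, WithTop.coe_le_coe]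
  exact P.v_add x y hx hy hxy

theorem V_add_eq {x y : K} (h : V P x ≠ V P y) : V P (x + y) = min (V P x) (V P y) := by
  -- wlog V x < V y
  wlog hlt : V P x < V P y generalizing x y
  · rw [add_comm, min_comm]
    exact this h.symm (lt_of_le_of_ne (not_lt.1 hlt) h.symm)
  have hx : x ≠ 0 := by
    intro h0; subst h0; simp only [V_zero] at hlt; exact not_top_lt hlt
  rw [min_eq_left hlt.le]
  rcases eq_or_ne y 0 with rfl | hy
  · simp
  have hxy : x + y ≠ 0 := by
    intro h0
    have : y = -x := by linear_combination h0
    rw [this, V_neg] at hlt; exact lt_irrefl _ hlt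
  refine le_antisymm ?_ ?_
  · -- V (x+y) ≤ V x : x = (x+y) + (-y)
    by_contra hgt
    push_neg at hgt
    have h2 := V_add_ge P (x + y) (-y)
    rw [V_neg] at h2
    have h3 : x + y + -y = x := by ring
    rw [h3] at h2
    have h4 : V P x < min (V P (x + y)) (V P y) := lt_min hgt hlt
    exact absurd h2 (not_le.2 h4)
  · have := V_add_ge P x y
    rwa [min_eq_left hlt.le] at this

end PT

namespace PT
variable {k K : Type*} [Field k] [Field K] [Algebra k K] (P : Place k K)

/-- "distinct or both ⊤" -/
def Dis (u w : WithTop ℤ) : Prop := u = w → u = ⊤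

theorem V_add_eq' {x y : K} (h : Dis (V P x) (V P y)) :
    V P (x + y) = min (V P x) (V P y) := by
  by_cases hxy : V P x = V P y
  · have hx : x = 0 := (V_eq_top_iff P).1 (h hxy)
    have hy : y = 0 := (V_eq_top_iff P).1 (hxy ▸ h hxy)
    simp [hx, hy]
  · exact V_add_eq P hxy

theorem Dis_min {a b c : WithTop ℤ} (hac : Dis a c) (hbc : Dis b c) : Dis (min a b) c := by
  rcases min_choice a b with h | h <;> rw [h] <;> assumption

theorem Dis_symm {a b : WithTop ℤ} (h : Dis a b) : Dis b a := by
  intro e; exact e.trans (h e.symm)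

theorem Dis_min_right {a b c : WithTop ℤ} (hab : Dis a b) (hac : Dis a c) :
    Dis a (min b c) := by
  rcases min_choice b c with h | h <;> rw [h] <;> assumption

theorem V_term {θ φ : K} (hφ : φ ≠ 0) (hθ : θ ≠ 0) (i : ℕ) :
    V P (φ ^ 4 * θ ^ i) = ((4 * P.v φ + i * P.v θ : ℤ) : WithTop ℤ) := by
  rw [V_of_ne P (mul_ne_zero (pow_ne_zero _ hφ) (pow_ne_zero _ hθ)),
    P.v_mul _ _ (pow_ne_zero _ hφ) (pow_ne_zero _ hθ), v_pow P hφ, v_pow P hθ]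
  norm_num

/-- The four terms of the expansion have pairwise distinct valuations mod 4. -/
theorem V_expansion {θ : K} (hθ : θ ≠ 0) (hN : Odd (P.v θ)) (φ₀ φ₁ φ₂ φ₃ : K) :
    V P (φ₀ ^ 4 + φ₁ ^ 4 * θ + φ₂ ^ 4 * θ ^ 2 + φ₃ ^ 4 * θ ^ 3) =
      min (min (min (V P (φ₀ ^ 4)) (V P (φ₁ ^ 4 * θ))) (V P (φ₂ ^ 4 * θ ^ 2)))
        (V P (φ₃ ^ 4 * θ ^ 3)) := by
  obtain ⟨n, hn⟩ := hN
  have hv0 : φ₀ ^ 4 ≠ 0 → V P (φ₀ ^ 4) = ((4 * P.v φ₀ + 0 * P.v θ : ℤ) : WithTop ℤ) := by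
    intro h
    simpa using V_term P (fun h0 => h (by simp [h0])) hθ 0
  have hv1 : φ₁ ^ 4 * θ ≠ 0 → V P (φ₁ ^ 4 * θ) = ((4 * P.v φ₁ + 1 * P.v θ : ℤ) : WithTop ℤ) := by
    intro h
    simpa using V_term P (fun h0 => h (by simp [h0])) hθ 1
  have hv2 : φ₂ ^ 4 * θ ^ 2 ≠ 0 →
      V P (φ₂ ^ 4 * θ ^ 2) = ((4 * P.v φ₂ + 2 * P.v θ : ℤ) : WithTop ℤ) := by
    intro h
    exact V_term P (fun h0 => h (by simp [h0])) hθ 2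
  have hv3 : φ₃ ^ 4 * θ ^ 3 ≠ 0 →
      V P (φ₃ ^ 4 * θ ^ 3) = ((4 * P.v φ₃ + 3 * P.v θ : ℤ) : WithTop ℤ) := by
    intro h
    exact V_term P (fun h0 => h (by simp [h0])) hθ 3
  -- generic distinctness
  have key : ∀ (x y : K) (i j : ℕ),
      (x ≠ 0 → V P x = ((4 * P.v (0:K) + 0 : ℤ) : WithTop ℤ)) → True := fun _ _ _ _ _ => trivial
  clear key
  have dis : ∀ (x y : K) (a b : ℤ), (x ≠ 0 → V P x = (a : WithTop ℤ)) →
      (y ≠ 0 → V P y = (b : WithTop ℤ)) → a ≠ b → Dis (V P x) (V P y) := by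
    intro x y a b hx hy hab he
    by_cases h0 : x = 0
    · simp [h0]
    by_cases h1 : y = 0
    · rw [he]; simp [h1]
    rw [hx h0, hy h1] at he
    exact absurd (WithTop.coe_injective he) hab
  have d01 := dis _ _ (4 * P.v φ₀ + 0 * P.v θ) (4 * P.v φ₁ + 1 * P.v θ) hv0 hv1 (by omega)
  have d02 := dis _ _ (4 * P.v φ₀ + 0 * P.v θ) (4 * P.v φ₂ + 2 * P.v θ) hv0 hv2 (by omega)
  have d03 := dis _ _ (4 * P.v φ₀ + 0 * P.v θ) (4 * P.v φ₃ + 3 * P.v θ) hv0 hv3 (by omega)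
  have d12 := dis _ _ (4 * P.v φ₁ + 1 * P.v θ) (4 * P.v φ₂ + 2 * P.v θ) hv1 hv2 (by omega)
  have d13 := dis _ _ (4 * P.v φ₁ + 1 * P.v θ) (4 * P.v φ₃ + 3 * P.v θ) hv1 hv3 (by omega)
  have d23 := dis _ _ (4 * P.v φ₂ + 2 * P.v θ) (4 * P.v φ₃ + 3 * P.v θ) hv2 hv3 (by omega)
  have e1 : V P (φ₀ ^ 4 + φ₁ ^ 4 * θ) = min (V P (φ₀ ^ 4)) (V P (φ₁ ^ 4 * θ)) :=
    V_add_eq' P d01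
  have e2 : V P (φ₀ ^ 4 + φ₁ ^ 4 * θ + φ₂ ^ 4 * θ ^ 2) =
      min (min (V P (φ₀ ^ 4)) (V P (φ₁ ^ 4 * θ))) (V P (φ₂ ^ 4 * θ ^ 2)) := by
    rw [V_add_eq' P (x := φ₀ ^ 4 + φ₁ ^ 4 * θ) (by rw [e1]; exact Dis_min d02 d12), e1]
  rw [V_add_eq' P (x := φ₀ ^ 4 + φ₁ ^ 4 * θ + φ₂ ^ 4 * θ ^ 2)
    (by rw [e2]; exact Dis_min (Dis_min d03 d13) d23), e2]

end PT

namespace PT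
variable {k K : Type*} [Field k] [Field K] [Algebra k K] (P : Place k K)

theorem v_div {x y : K} (hx : x ≠ 0) (hy : y ≠ 0) : P.v (x / y) = P.v x - P.v y := by
  rw [div_eq_mul_inv, P.v_mul x y⁻¹ hx (inv_ne_zero hy), v_inv P hy]
  ring

section CharTwo
variable [CharP K 2]

theorem add4 (x y : K) : (x + y) ^ 4 = x ^ 4 + y ^ 4 := by
  calc (x + y) ^ 4 = ((x + y) ^ 2) ^ 2 := by ring
  _ = (x ^ 2 + y ^ 2) ^ 2 := by rw [CharTwo.add_sq]
  _ = (x ^ 2) ^ 2 + (y ^ 2) ^ 2 := by rw [CharTwo.add_sq]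
  _ = x ^ 4 + y ^ 4 := by ring

/-- `lhs_iff`: the regularity condition for `a = θ y² + e²`. -/
theorem lhs_iff {θ y a e : K} (hθ : θ ≠ 0) (hN : Odd (P.v θ))
    (ha : a = θ * y ^ 2 + e ^ 2) :
    (∃ s : K, a + s ^ 2 = 0 ∨ 0 ≤ P.v (a + s ^ 2)) ↔ 0 ≤ V P (θ * y ^ 2) := by
  have h2 : (2 : K) = 0 := by exact_mod_cast CharP.cast_eq_zero K 2
  constructor
  · rintro ⟨s, hs⟩
    have hq : a + s ^ 2 = θ * y ^ 2 + (e + s) ^ 2 := by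
      rw [CharTwo.add_sq]; linear_combination ha
    rw [hq] at hs
    set q := e + s with hqdef
    set x := θ * y ^ 2 with hxdef
    by_contra hneg
    push_neg at hneg
    have hxne : x ≠ 0 := by
      intro h0; rw [h0] at hneg; simp only [V_zero] at hneg
      exact not_top_lt hneg
    have hyne : y ≠ 0 := fun h0 => hxne (by rw [hxdef, h0]; ring)
    have hvx : P.v x = P.v θ + 2 * P.v y := by
      rw [hxdef, P.v_mul _ _ hθ (pow_ne_zero _ hyne), v_pow P hyne]
      push_cast; ring
    have hvxneg : P.v x < 0 := by
      have := V_of_ne P hxne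
      rw [this] at hneg
      exact_mod_cast hneg
    obtain ⟨n, hn⟩ := hN
    rcases hs with hs | hs
    · -- x = q²
      have hq2 : q ^ 2 = x := by
        have : q ^ 2 = -x := by linear_combination hs
        rw [this, CharTwo.neg_eq]
      have hqne : q ≠ 0 := by intro h0; rw [h0] at hq2; simp at hq2; exact hxne hq2.symm
      have := v_pow P hqne 2
      rw [hq2] at this
      omega
    · -- 0 ≤ v (x + q²), but V (x+q²) = min < 0
      have hqne : q ≠ 0 := by
        intro h0; rw [h0] at hs; simp at hs; omega
      have hd : V P x ≠ V P (q ^ 2) := by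
        rw [V_of_ne P hxne, V_of_ne P (pow_ne_zero _ hqne), v_pow P hqne]
        intro h
        have := WithTop.coe_injective h
        omega
      have hmin := V_add_eq P hd
      have hle : V P (x + q ^ 2) ≤ V P x := by rw [hmin]; exact min_le_left _ _
      have hne : x + q ^ 2 ≠ 0 := by
        intro h0
        have htop : min (V P x) (V P (q ^ 2)) = ⊤ := by rw [← hmin, h0, V_zero]
        exact hxne ((V_eq_top_iff P).1
          (top_le_iff.1 (htop ▸ min_le_left (V P x) (V P (q ^ 2)))))
      rw [V_of_ne P hxne, V_of_ne P hne] at hle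
      have : P.v (x + q ^ 2) ≤ P.v x := by exact_mod_cast hle
      omega
  · intro hV
    refine ⟨e, ?_⟩
    have he : a + e ^ 2 = θ * y ^ 2 := by linear_combination ha + e ^ 2 * h2
    rcases eq_or_ne (θ * y ^ 2) 0 with h0 | h0
    · left; rw [he, h0]
    · right; rw [he]
      rw [V_of_ne P h0] at hV
      exact_mod_cast hV

end CharTwo

end PT
namespace PT
variable {k K : Type*} [Field k] [Field K] [Algebra k K] (P : Place k K)

theorem V_term1 {θ φ : K} (hφ : φ ≠ 0) (hθ : θ ≠ 0) :
    V P (φ ^ 4 * θ) = ((4 * P.v φ + P.v θ : ℤ) : WithTop ℤ) := by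
  have := V_term P hφ hθ 1
  rw [pow_one] at this
  rw [this]; norm_num

section CharTwo
variable [CharP K 2]

theorem crit_iff {θ φ₁ φ₂ φ₃ : K} (hθ : θ ≠ 0) (hN : Odd (P.v θ))
    (hB : ¬(φ₁ = 0 ∧ φ₃ = 0)) :
    (min (V P (φ₁ ^ 4 * θ)) (V P (φ₃ ^ 4 * θ ^ 3)) < V P (φ₂ ^ 4 * θ ^ 2)) ↔
      0 ≤ V P (θ * ((φ₂ ^ 2 + φ₁ * φ₃) / (φ₁ ^ 2 + φ₃ ^ 2 * θ)) ^ 2) := by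
  obtain ⟨n, hn⟩ := hN
  set N := P.v θ with hNdef
  set m := φ₂ ^ 2 + φ₁ * φ₃ with hmdef
  set B := φ₁ ^ 2 + φ₃ ^ 2 * θ with hBdef
  have hBne : B ≠ 0 := by
    intro h0
    rw [hBdef] at h0
    by_cases h3 : φ₃ = 0
    · rw [h3] at h0
      have h1 : φ₁ = 0 := by
        have : φ₁ ^ 2 = 0 := by linear_combination h0
        exact pow_eq_zero_iff (by norm_num) |>.1 this
      exact hB ⟨h1, h3⟩
    · have h1 : φ₁ ≠ 0 := by
        intro h1
        rw [h1] at h0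
        have : φ₃ ^ 2 * θ = 0 := by linear_combination h0
        rcases mul_eq_zero.1 this with h | h
        · exact h3 (pow_eq_zero_iff (by norm_num) |>.1 h)
        · exact hθ h
      have he : φ₁ ^ 2 = φ₃ ^ 2 * θ := by
        rw [← CharTwo.neg_eq (φ₃ ^ 2 * θ)]; linear_combination h0
      have := congrArg P.v he
      rw [v_pow P h1, P.v_mul _ _ (pow_ne_zero _ h3) hθ, v_pow P h3] at this
      push_cast at this
      omega
  by_cases hm : m = 0
  · -- RHS is `0 ≤ ⊤`, and LHS must be shown true
    have hRHS : θ * (m / B) ^ 2 = 0 := by rw [hm]; simp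
    rw [hRHS]
    simp only [V_zero, le_top, iff_true]
    by_cases h2 : φ₂ = 0
    · -- V₂ = ⊤, and some of V₁ V₃ finite
      have hV2 : V P (φ₂ ^ 4 * θ ^ 2) = ⊤ := by rw [h2]; simp
      rw [hV2]
      have h13 : φ₁ = 0 ∨ φ₃ = 0 := by
        have : φ₁ * φ₃ = 0 := by rw [hmdef, h2] at hm; linear_combination hm
        exact mul_eq_zero.1 this
      rcases h13 with h1 | h3
      · have h3 : φ₃ ≠ 0 := fun h3 => hB ⟨h1, h3⟩
        refine lt_of_le_of_lt (min_le_right _ _) ?_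
        rw [V_term P h3 hθ 3]
        exact WithTop.coe_lt_top _
      · have h1 : φ₁ ≠ 0 := fun h1 => hB ⟨h1, h3⟩
        refine lt_of_le_of_lt (min_le_left _ _) ?_
        rw [V_term1 P h1 hθ]
        exact WithTop.coe_lt_top _
    · -- φ₂ ≠ 0 : then φ₁ ≠ 0, φ₃ ≠ 0 and 2c = a+b
      have hQ : φ₂ ^ 2 = φ₁ * φ₃ := by
        rw [← CharTwo.neg_eq (φ₁ * φ₃)]; linear_combination hm
      have h1 : φ₁ ≠ 0 := by
        intro h1; rw [h1, zero_mul] at hQ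
        exact h2 (pow_eq_zero_iff (by norm_num) |>.1 hQ)
      have h3 : φ₃ ≠ 0 := by
        intro h3; rw [h3, mul_zero] at hQ
        exact h2 (pow_eq_zero_iff (by norm_num) |>.1 hQ)
      have hc : 2 * P.v φ₂ = P.v φ₁ + P.v φ₃ := by
        have := congrArg P.v hQ
        rw [v_pow P h2, P.v_mul _ _ h1 h3] at this
        push_cast at this
        omega
      rw [V_term1 P h1 hθ, V_term P h3 hθ 3, V_term P h2 hθ 2, ← WithTop.coe_min,
        WithTop.coe_lt_coe]
      push_cast
      omega
  · -- m ≠ 0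
    have hmB : m / B ≠ 0 := div_ne_zero hm hBne
    have hxne : θ * (m / B) ^ 2 ≠ 0 := mul_ne_zero hθ (pow_ne_zero _ hmB)
    have hvx : P.v (θ * (m / B) ^ 2) = N + 2 * (P.v m - P.v B) := by
      rw [P.v_mul _ _ hθ (pow_ne_zero _ hmB), v_pow P hmB, v_div P hm hBne]
      push_cast; ring
    have hB2 : B ^ 2 = φ₁ ^ 4 + φ₃ ^ 4 * θ ^ 2 := by
      rw [hBdef, CharTwo.add_sq]; ring
    have hRHS : (0 ≤ V P (θ * (m / B) ^ 2)) ↔ 0 ≤ N + 2 * (P.v m - P.v B) := by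
      rw [V_of_ne P hxne, hvx, show ((0 : WithTop ℤ)) = ((0 : ℤ) : WithTop ℤ) from rfl,
        WithTop.coe_le_coe]
    rw [hRHS]
    by_cases h1 : φ₁ = 0
    · -- B = φ₃²θ, m = φ₂²
      have h3 : φ₃ ≠ 0 := fun h3 => hB ⟨h1, h3⟩
      have h2 : φ₂ ≠ 0 := by
        intro h2; rw [hmdef, h1, h2] at hm; simp at hm
      have hvB : P.v B = 2 * P.v φ₃ + N := by
        rw [hBdef, h1, show (0:K) ^ 2 + φ₃ ^ 2 * θ = φ₃ ^ 2 * θ by ring,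
          P.v_mul _ _ (pow_ne_zero _ h3) hθ, v_pow P h3]
        push_cast; ring
      have hvm : P.v m = 2 * P.v φ₂ := by
        rw [hmdef, h1, show φ₂ ^ 2 + 0 * φ₃ = φ₂ ^ 2 by ring, v_pow P h2]
        push_cast; ring
      have hV1 : V P (φ₁ ^ 4 * θ) = ⊤ := by rw [h1]; simp
      rw [hV1, min_eq_right le_top, V_term P h3 hθ 3, V_term P h2 hθ 2,
        WithTop.coe_lt_coe, hvm, hvB]
      push_cast
      omega
    by_cases h3 : φ₃ = 0
    · have h2 : φ₂ ≠ 0 := by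
        intro h2; rw [hmdef, h3, h2] at hm; simp at hm
      have hvB : P.v B = 2 * P.v φ₁ := by
        rw [hBdef, h3, show φ₁ ^ 2 + (0:K) ^ 2 * θ = φ₁ ^ 2 by ring, v_pow P h1]
        push_cast; ring
      have hvm : P.v m = 2 * P.v φ₂ := by
        rw [hmdef, h3, show φ₂ ^ 2 + φ₁ * 0 = φ₂ ^ 2 by ring, v_pow P h2]
        push_cast; ring
      have hV3 : V P (φ₃ ^ 4 * θ ^ 3) = ⊤ := by rw [h3]; simp
      rw [hV3, min_eq_left le_top, V_term1 P h1 hθ, V_term P h2 hθ 2,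
        WithTop.coe_lt_coe, hvm, hvB]
      push_cast
      omega
    · -- φ₁ ≠ 0 and φ₃ ≠ 0
      have hvB2 : 2 * P.v B = min (4 * P.v φ₁) (4 * P.v φ₃ + 2 * N) := by
        have hd : Dis (V P (φ₁ ^ 4)) (V P (φ₃ ^ 4 * θ ^ 2)) := by
          intro he
          rw [show (φ₁:K) ^ 4 = φ₁ ^ 4 * θ ^ 0 by ring] at he ⊢
          rw [V_term P h1 hθ 0, V_term P h3 hθ 2] at he
          have := WithTop.coe_injective he
          push_cast at this
          omega
        have hVB2 : V P (B ^ 2) = min (V P (φ₁ ^ 4)) (V P (φ₃ ^ 4 * θ ^ 2)) := by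
          rw [hB2]; exact V_add_eq' P hd
        rw [V_of_ne P (pow_ne_zero _ hBne),
          show (φ₁:K) ^ 4 = φ₁ ^ 4 * θ ^ 0 by ring, V_term P h1 hθ 0, V_term P h3 hθ 2,
          ← WithTop.coe_min] at hVB2
        have := WithTop.coe_injective hVB2
        rw [v_pow P hBne] at this
        push_cast at this
        push_cast
        omega
      rw [V_term1 P h1 hθ, V_term P h3 hθ 3, ← WithTop.coe_min]
      by_cases h2 : φ₂ = 0
      · -- m = φ₁ φ₃, V₂ = ⊤ : both sides true
        have hvm : P.v m = P.v φ₁ + P.v φ₃ := by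
          rw [hmdef, h2, show (0:K) ^ 2 + φ₁ * φ₃ = φ₁ * φ₃ by ring, P.v_mul _ _ h1 h3]
        have hV2 : V P (φ₂ ^ 4 * θ ^ 2) = ⊤ := by rw [h2]; simp
        rw [hV2]
        refine iff_of_true (WithTop.coe_lt_top _) ?_
        omega
      · rw [V_term P h2 hθ 2, WithTop.coe_lt_coe]
        by_cases hceq : 2 * P.v φ₂ = P.v φ₁ + P.v φ₃
        · -- cancellation case : both sides true
          have hvm : min (2 * P.v φ₂) (P.v φ₁ + P.v φ₃) ≤ P.v m := by
            have hge := V_add_ge P (φ₂ ^ 2) (φ₁ * φ₃)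
            rw [← hmdef, V_of_ne P hm, V_of_ne P (pow_ne_zero _ h2),
              V_of_ne P (mul_ne_zero h1 h3), v_pow P h2, P.v_mul _ _ h1 h3,
              ← WithTop.coe_min] at hge
            have := WithTop.coe_le_coe.1 hge
            push_cast at this
            omega
          refine iff_of_true (by push_cast; omega) (by omega)
        · have hvm : P.v m = min (2 * P.v φ₂) (P.v φ₁ + P.v φ₃) := by
            have hd : V P (φ₂ ^ 2) ≠ V P (φ₁ * φ₃) := by
              rw [V_of_ne P (pow_ne_zero _ h2), V_of_ne P (mul_ne_zero h1 h3),
                v_pow P h2, P.v_mul _ _ h1 h3]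
              intro he
              have := WithTop.coe_injective he
              push_cast at this
              omega
            have := V_add_eq P hd
            rw [← hmdef, V_of_ne P hm, V_of_ne P (pow_ne_zero _ h2),
              V_of_ne P (mul_ne_zero h1 h3), v_pow P h2, P.v_mul _ _ h1 h3,
              ← WithTop.coe_min] at this
            have := WithTop.coe_injective this
            push_cast at this
            omega
          push_cast
          omega

end CharTwo
end PT

namespace PT

theorem min4c {α : Type*} [LinearOrder α] (a b c d : α) (hcb : c ≤ b) (hcd : c ≤ d) :
    min (min (min a b) c) d = min a c := by
  apply le_antisymm
  · exact le_min ((min_le_left _ _).trans ((min_le_left _ _).trans (min_le_left _ _)))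
      ((min_le_left _ _).trans (min_le_right _ _))
  · exact le_min (le_min (le_min (min_le_left _ _) ((min_le_right a c).trans hcb))
      (min_le_right _ _)) ((min_le_right a c).trans hcd)

theorem min3c {α : Type*} [LinearOrder α] (a b c : α) (hb : min a c ≤ b) :
    min (min a b) c = min a c := by
  apply le_antisymm
  · exact le_min ((min_le_left _ _).trans (min_le_left _ _)) (min_le_right _ _)
  · exact le_min (le_min (min_le_left _ _) hb) (min_le_right _ _)

variable {k K : Type*} [Field k] [IsAlgClosed k] [Field K] [Algebra k K] (P : Place k K)

section CharTwo
variable [CharP K 2]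

theorem pt_iff_core
    (hres : ∀ u : K, u ≠ 0 → 0 ≤ P.v u → ∃ c : k, u - algebraMap k K c = 0 ∨
        (u - algebraMap k K c ≠ 0 ∧ 0 < P.v (u - algebraMap k K c)))
    {θ φ₀ φ₁ φ₂ φ₃ : K} (hθ : θ ≠ 0) (hN : Odd (P.v θ)) (hNpos : 0 < P.v θ)
    (hB : ¬(φ₁ = 0 ∧ φ₃ = 0)) :
    PseudoTameAt P (φ₀ ^ 4 + φ₁ ^ 4 * θ + φ₂ ^ 4 * θ ^ 2 + φ₃ ^ 4 * θ ^ 3) ↔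
      min (V P (φ₁ ^ 4 * θ)) (V P (φ₃ ^ 4 * θ ^ 3)) < V P (φ₂ ^ 4 * θ ^ 2) := by
  have h2K : (2 : K) = 0 := by exact_mod_cast CharP.cast_eq_zero K 2
  obtain ⟨n, hn⟩ := hN
  set N := P.v θ with hNdef
  set f := φ₀ ^ 4 + φ₁ ^ 4 * θ + φ₂ ^ 4 * θ ^ 2 + φ₃ ^ 4 * θ ^ 3 with hfdef
  have hVf : V P f = min (min (min (V P (φ₀ ^ 4)) (V P (φ₁ ^ 4 * θ))) (V P (φ₂ ^ 4 * θ ^ 2)))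
      (V P (φ₃ ^ 4 * θ ^ 3)) := V_expansion P hθ ⟨n, hn⟩ φ₀ φ₁ φ₂ φ₃
  set V0 := V P (φ₀ ^ 4) with hV0def
  set V1 := V P (φ₁ ^ 4 * θ) with hV1def
  set V2 := V P (φ₂ ^ 4 * θ ^ 2) with hV2def
  set V3 := V P (φ₃ ^ 4 * θ ^ 3) with hV3def
  -- min V1 V3 is finite
  have hmin13 : min V1 V3 < ⊤ := by
    rcases not_and_or.1 hB with h1 | h3
    · refine lt_of_le_of_lt (min_le_left _ _) ?_
      rw [hV1def, V_term1 P h1 hθ]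
      exact WithTop.coe_lt_top _
    · refine lt_of_le_of_lt (min_le_right _ _) ?_
      rw [hV3def, V_term P h3 hθ 3]
      exact WithTop.coe_lt_top _
  have hfne : f ≠ 0 := by
    rw [← V_lt_top_iff P, hVf]
    refine lt_of_le_of_lt ?_ hmin13
    exact le_min (((min_le_left _ _).trans (min_le_left _ _)).trans (min_le_right _ _))
      (min_le_right _ _)
  have hVfc : V P f = (P.v f : WithTop ℤ) := V_of_ne P hfne
  constructor
  · -- pseudo-tame → criterion
    rintro ⟨t, hbr, h, hho, hthne, hodd⟩
    by_contra hcrit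
    push_neg at hcrit
    have hc1 : V2 ≤ V1 := hcrit.trans (min_le_left _ _)
    have hc3 : V2 ≤ V3 := hcrit.trans (min_le_right _ _)
    -- V2 is finite (else min V1 V3 = ⊤, contradicting hB)
    have hφ2 : φ₂ ≠ 0 := by
      intro h2
      have : V2 = ⊤ := by rw [hV2def, h2]; simp
      rw [this] at hc1 hc3
      have h1 : φ₁ = 0 := by
        have := top_le_iff.1 hc1
        rw [hV1def, V_eq_top_iff] at this
        rcases mul_eq_zero.1 this with h | h
        · exact pow_eq_zero_iff (by norm_num) |>.1 h
        · exact absurd h hθ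
      have h3 : φ₃ = 0 := by
        have := top_le_iff.1 hc3
        rw [hV3def, V_eq_top_iff] at this
        rcases mul_eq_zero.1 this with h | h
        · exact pow_eq_zero_iff (by norm_num) |>.1 h
        · exact absurd (pow_eq_zero_iff (by norm_num : (3:ℕ) ≠ 0) |>.1 h) hθ
      exact hB ⟨h1, h3⟩
    have hV2val : V2 = ((4 * P.v φ₂ + 2 * N : ℤ) : WithTop ℤ) := by
      rw [hV2def]; exact V_term P hφ2 hθ 2
    -- v f is "even"
    have hVf2 : V P f = min V0 V2 := by rw [hVf]; exact min4c _ _ _ _ hc1 hc3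
    have hvf_even : ∃ e : ℤ, P.v f = 2 * e := by
      rw [hVfc] at hVf2
      rcases min_choice V0 V2 with hmc | hmc <;> rw [hmc] at hVf2
      · have hφ0 : φ₀ ≠ 0 := by
          intro h0
          rw [hV0def, h0] at hVf2
          simp at hVf2
        rw [hV0def, show (φ₀:K) ^ 4 = φ₀ ^ 4 * θ ^ 0 by ring, V_term P hφ0 hθ 0] at hVf2
        have := WithTop.coe_injective hVf2
        exact ⟨2 * P.v φ₀, by omega⟩
      · rw [hV2val] at hVf2
        have := WithTop.coe_injective hVf2
        exact ⟨2 * P.v φ₂ + N, by omega⟩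
    rcases hbr with ⟨hvf0, c, htc, htne, hvt⟩ | ⟨hvfneg, htinv⟩
    · -- branch 1 : t = f - c
      obtain ⟨d, hd⟩ := IsAlgClosed.exists_pow_nat_eq c (n := 4) (by norm_num)
      set ψ : K := φ₀ + algebraMap k K d + h with hψdef
      have hψ4 : ψ ^ 4 = φ₀ ^ 4 + algebraMap k K c + h ^ 4 := by
        rw [hψdef, add4, add4, ← map_pow, hd]
      have hid : t + h ^ 4 = ψ ^ 4 + φ₁ ^ 4 * θ + φ₂ ^ 4 * θ ^ 2 + φ₃ ^ 4 * θ ^ 3 := by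
        rw [htc, CharTwo.sub_eq_add, hfdef]
        linear_combination -hψ4
      have hVth : V P (t + h ^ 4) = min (V P (ψ ^ 4)) V2 := by
        rw [hid, V_expansion P hθ ⟨n, hn⟩, ← hV1def, ← hV2def, ← hV3def]
        exact min4c _ _ _ _ hc1 hc3
      rw [V_of_ne P hthne] at hVth
      rcases min_choice (V P (ψ ^ 4)) V2 with hmc | hmc <;> rw [hmc] at hVth
      · have hψne : ψ ≠ 0 := by
          intro h0
          rw [h0] at hVth
          simp at hVth
        rw [show (ψ:K) ^ 4 = ψ ^ 4 * θ ^ 0 by ring, V_term P hψne hθ 0] at hVth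
        have := WithTop.coe_injective hVth
        obtain ⟨j, hj⟩ := hodd
        omega
      · rw [hV2val] at hVth
        have := WithTop.coe_injective hVth
        obtain ⟨j, hj⟩ := hodd
        omega
    · -- branch 2 : t = f⁻¹
      rcases eq_or_ne h 0 with rfl | hhne
      · -- h = 0
        rw [htinv] at hodd hthne
        have h04 : (0:K) ^ 4 = 0 := by norm_num
        rw [h04, add_zero] at hodd
        rw [v_inv P hfne] at hodd
        obtain ⟨e, he⟩ := hvf_even
        obtain ⟨j, hj⟩ := hodd
        omega
      · have hhO : 0 ≤ P.v h := hho.resolve_left hhne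
        have hsum : t + h ^ 4 = (1 + f * h ^ 4) / f := by
          rw [htinv]; field_simp
        have hnum_ne : 1 + f * h ^ 4 ≠ 0 := by
          intro h0
          exact hthne (by rw [hsum, h0, zero_div])
        have hone : 1 + f * h ^ 4 = (1 + φ₀ * h) ^ 4 + (φ₁ * h) ^ 4 * θ +
            (φ₂ * h) ^ 4 * θ ^ 2 + (φ₃ * h) ^ 4 * θ ^ 3 := by
          rw [hfdef, add4]
          ring
        have hVh4 : V P (h ^ 4) = ((4 * P.v h : ℤ) : WithTop ℤ) := by
          rw [V_of_ne P (pow_ne_zero _ hhne), v_pow P hhne]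
          norm_num
        have e1 : V P ((φ₁ * h) ^ 4 * θ) = V1 + V P (h ^ 4) := by
          rw [show (φ₁ * h) ^ 4 * θ = (φ₁ ^ 4 * θ) * h ^ 4 by ring, V_mul, hV1def]
        have e2 : V P ((φ₂ * h) ^ 4 * θ ^ 2) = V2 + V P (h ^ 4) := by
          rw [show (φ₂ * h) ^ 4 * θ ^ 2 = (φ₂ ^ 4 * θ ^ 2) * h ^ 4 by ring, V_mul, hV2def]
        have e3 : V P ((φ₃ * h) ^ 4 * θ ^ 3) = V3 + V P (h ^ 4) := by
          rw [show (φ₃ * h) ^ 4 * θ ^ 3 = (φ₃ ^ 4 * θ ^ 3) * h ^ 4 by ring, V_mul, hV3def]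
        have hVnum : V P (1 + f * h ^ 4) =
            min (V P ((1 + φ₀ * h) ^ 4)) (V P ((φ₂ * h) ^ 4 * θ ^ 2)) := by
          rw [hone, V_expansion P hθ ⟨n, hn⟩]
          rw [e1, e2, e3]
          exact min4c _ _ _ _ (add_le_add hc1 le_rfl) (add_le_add hc3 le_rfl)
        -- numerator valuation is even
        have hnum_even : ∃ e : ℤ, P.v (1 + f * h ^ 4) = 2 * e := by
          rw [V_of_ne P hnum_ne] at hVnum
          rcases min_choice (V P ((1 + φ₀ * h) ^ 4)) (V P ((φ₂ * h) ^ 4 * θ ^ 2)) with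
            hmc | hmc <;> rw [hmc] at hVnum
          · have hψne : (1 : K) + φ₀ * h ≠ 0 := by
              intro h0
              rw [h0] at hVnum
              simp at hVnum
            rw [V_of_ne P (pow_ne_zero _ hψne), v_pow P hψne] at hVnum
            have := WithTop.coe_injective hVnum
            exact ⟨2 * P.v (1 + φ₀ * h), by push_cast at this; omega⟩
          · have hφ2h : φ₂ * h ≠ 0 := mul_ne_zero hφ2 hhne
            rw [V_term P hφ2h hθ 2] at hVnum
            have := WithTop.coe_injective hVnum
            exact ⟨2 * P.v (φ₂ * h) + N, by omega⟩
        have hvth : P.v (t + h ^ 4) = P.v (1 + f * h ^ 4) - P.v f := by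
          rw [hsum, v_div P hnum_ne hfne]
        obtain ⟨e, he⟩ := hvf_even
        obtain ⟨e', he'⟩ := hnum_even
        obtain ⟨j, hj⟩ := hodd
        omega
  · -- criterion → pseudo-tame
    intro hcrit
    have hw : ∃ w : ℤ, min V1 V3 = (w : WithTop ℤ) ∧ Odd w := by
      rcases min_choice V1 V3 with hmc | hmc
      · have h1 : φ₁ ≠ 0 := by
          intro h0
          have htop : V1 = ⊤ := by rw [hV1def, h0]; simp
          rw [hmc, htop] at hcrit
          exact not_top_lt (lt_of_lt_of_le hcrit le_top)
        refine ⟨4 * P.v φ₁ + N, ?_, ⟨2 * P.v φ₁ + n, by omega⟩⟩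
        rw [hmc, hV1def, V_term1 P h1 hθ]
      · have h3 : φ₃ ≠ 0 := by
          intro h0
          have htop : V3 = ⊤ := by rw [hV3def, h0]; simp
          rw [hmc, htop] at hcrit
          exact not_top_lt (lt_of_lt_of_le hcrit le_top)
        refine ⟨4 * P.v φ₃ + 3 * N, ?_, ⟨2 * P.v φ₃ + 3 * n + 1, by omega⟩⟩
        rw [hmc, hV3def, V_term P h3 hθ 3]
        norm_num
        rfl
    obtain ⟨w, hwmin, hwodd⟩ := hw
    have hVfle : V P f ≤ (w : WithTop ℤ) := by
      rw [hVf, ← hwmin]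
      exact le_min (((min_le_left _ _).trans (min_le_left _ _)).trans (min_le_right _ _))
        (min_le_right _ _)
    by_cases hvf : 0 ≤ P.v f
    · -- construction in the case v f ≥ 0
      have hφ0O : ∃ d : k, (φ₀ - algebraMap k K d = 0) ∨
          (φ₀ - algebraMap k K d ≠ 0 ∧ 0 < P.v (φ₀ - algebraMap k K d)) := by
        rcases eq_or_ne φ₀ 0 with h0 | h0
        · exact ⟨0, Or.inl (by rw [h0, map_zero, sub_zero])⟩
        · apply hres φ₀ h0
          have h4 : (0 : WithTop ℤ) ≤ V0 := by
            calc (0 : WithTop ℤ) ≤ V P f := by rw [hVfc]; exact_mod_cast hvf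
            _ ≤ V0 := by
              rw [hVf]
              exact ((min_le_left _ _).trans (min_le_left _ _)).trans (min_le_left _ _)
          rw [hV0def, show (φ₀:K) ^ 4 = φ₀ ^ 4 * θ ^ 0 by ring, V_term P h0 hθ 0] at h4
          have h5 : (0:ℤ) ≤ 4 * P.v φ₀ + 0 * N := by exact_mod_cast h4
          omega
      obtain ⟨d, hρ⟩ := hφ0O
      set ρ := φ₀ - algebraMap k K d with hρdef
      set t := f - algebraMap k K (d ^ 4) with htdef
      have hρ4 : ρ ^ 4 = φ₀ ^ 4 + algebraMap k K (d ^ 4) := by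
        rw [hρdef, CharTwo.sub_eq_add, add4, map_pow]
      have hid : t = ρ ^ 4 + φ₁ ^ 4 * θ + φ₂ ^ 4 * θ ^ 2 + φ₃ ^ 4 * θ ^ 3 := by
        rw [htdef, CharTwo.sub_eq_add, hfdef]
        linear_combination -hρ4
      have hVt4 : V P t = min (min (min (V P (ρ ^ 4)) V1) V2) V3 := by
        rw [hid, V_expansion P hθ ⟨n, hn⟩, ← hV1def, ← hV2def, ← hV3def]
      -- positivity of the pieces
      have hVfge : (0 : WithTop ℤ) ≤ V P f := by rw [hVfc]; exact_mod_cast hvf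
      have hV1pos : (0 : WithTop ℤ) < V1 := by
        rcases eq_or_ne φ₁ 0 with h1 | h1
        · rw [hV1def, h1]
          simp
        · have hge : (0 : WithTop ℤ) ≤ V1 := le_trans hVfge (by
            rw [hVf]
            exact ((min_le_left _ _).trans (min_le_left _ _)).trans (min_le_right _ _))
          rw [hV1def, V_term1 P h1 hθ] at hge ⊢
          have h5 : (0:ℤ) ≤ 4 * P.v φ₁ + N := by exact_mod_cast hge
          exact_mod_cast (by omega : (0:ℤ) < 4 * P.v φ₁ + N)
      have hV2pos : (0 : WithTop ℤ) < V2 := by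
        rcases eq_or_ne φ₂ 0 with h1 | h1
        · rw [hV2def, h1]
          simp
        · have hge : (0 : WithTop ℤ) ≤ V2 := le_trans hVfge (by
            rw [hVf]
            exact (min_le_left _ _).trans (min_le_right _ _))
          rw [hV2def, V_term P h1 hθ 2] at hge ⊢
          have h5 : (0:ℤ) ≤ 4 * P.v φ₂ + 2 * N := by exact_mod_cast hge
          exact_mod_cast (by omega : (0:ℤ) < 4 * P.v φ₂ + 2 * N)
      have hV3pos : (0 : WithTop ℤ) < V3 := by
        rcases eq_or_ne φ₃ 0 with h1 | h1
        · rw [hV3def, h1]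
          simp
        · have hge : (0 : WithTop ℤ) ≤ V3 := le_trans hVfge (by
            rw [hVf]
            exact min_le_right _ _)
          rw [hV3def, V_term P h1 hθ 3] at hge ⊢
          have h5 : (0:ℤ) ≤ 4 * P.v φ₃ + 3 * N := by exact_mod_cast hge
          exact_mod_cast (by omega : (0:ℤ) < 4 * P.v φ₃ + 3 * N)
      have hρ4pos : (0 : WithTop ℤ) < V P (ρ ^ 4) := by
        rcases hρ with h0 | ⟨hne, hpos⟩
        · rw [show ρ ^ 4 = 0 by rw [h0]; norm_num]
          simp
        · rw [V_of_ne P (pow_ne_zero _ hne), v_pow P hne]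
          exact_mod_cast (by omega : (0:ℤ) < 4 * P.v ρ)
      have hVtpos : (0 : WithTop ℤ) < V P t := by
        rw [hVt4]
        exact lt_min (lt_min (lt_min hρ4pos hV1pos) hV2pos) hV3pos
      have hVtle : V P t ≤ (w : WithTop ℤ) := by
        rw [hVt4, ← hwmin]
        exact le_min (((min_le_left _ _).trans (min_le_left _ _)).trans (min_le_right _ _))
          (min_le_right _ _)
      have htne : t ≠ 0 := by
        rw [← V_lt_top_iff P]
        exact lt_of_le_of_lt hVtle (WithTop.coe_lt_top w)
      have hvtpos : 0 < P.v t := by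
        have := hVtpos
        rw [V_of_ne P htne] at this
        exact_mod_cast this
      have hsum2 : t + ρ ^ 4 = (0:K) ^ 4 + φ₁ ^ 4 * θ + φ₂ ^ 4 * θ ^ 2 + φ₃ ^ 4 * θ ^ 3 := by
        rw [hid]
        linear_combination ρ ^ 4 * h2K
      have hVsum2 : V P (t + ρ ^ 4) = min V1 V3 := by
        rw [hsum2, V_expansion P hθ ⟨n, hn⟩, ← hV1def, ← hV2def, ← hV3def,
          show V P ((0:K) ^ 4) = ⊤ by rw [show ((0:K) ^ 4) = 0 by norm_num, V_zero],
          min_eq_right le_top]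
        exact min3c _ _ _ hcrit.le
      refine ⟨t, Or.inl ⟨hvf, d ^ 4, htdef, htne, hvtpos⟩, ρ, ?_, ?_, ?_⟩
      · rcases hρ with h0 | ⟨hne, hpos⟩
        · exact Or.inl h0
        · exact Or.inr hpos.le
      · rw [← V_lt_top_iff P, hVsum2, hwmin]
        exact WithTop.coe_lt_top w
      · have hne2 : t + ρ ^ 4 ≠ 0 := by
          rw [← V_lt_top_iff P, hVsum2, hwmin]
          exact WithTop.coe_lt_top w
        have := hVsum2
        rw [V_of_ne P hne2, hwmin] at this
        have hv : P.v (t + ρ ^ 4) = w := WithTop.coe_injective this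
        rw [hv]
        exact hwodd
    · push_neg at hvf
      by_cases hvfodd : Odd (P.v f)
      · refine ⟨f⁻¹, Or.inr ⟨hvf, rfl⟩, 0, Or.inl rfl, ?_, ?_⟩
        · rw [show (0:K) ^ 4 = 0 by norm_num, add_zero]
          exact inv_ne_zero hfne
        · rw [show (0:K) ^ 4 = 0 by norm_num, add_zero, v_inv P hfne]
          obtain ⟨j, hj⟩ := hvfodd
          exact ⟨-j - 1, by omega⟩
      · -- v f even, so the minimum is attained at the φ₀ term
        have h4c : min (min (min V0 V1) V2) V3 = V0 ∨ min (min (min V0 V1) V2) V3 = V1 ∨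
            min (min (min V0 V1) V2) V3 = V2 ∨ min (min (min V0 V1) V2) V3 = V3 := by
          rcases min_choice (min (min V0 V1) V2) V3 with h | h <;> rw [h]
          · rcases min_choice (min V0 V1) V2 with h' | h' <;> rw [h']
            · rcases min_choice V0 V1 with h'' | h'' <;> rw [h'']
              · exact Or.inl rfl
              · exact Or.inr (Or.inl rfl)
            · exact Or.inr (Or.inr (Or.inl rfl))
          · exact Or.inr (Or.inr (Or.inr rfl))
        have hVfm : (P.v f : WithTop ℤ) = min (min (min V0 V1) V2) V3 := by
          rw [← hVfc, hVf]
        have hattain : (P.v f : WithTop ℤ) = V0 := by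
          rcases h4c with h | h | h | h
          · rw [hVfm, h]
          · exfalso
            rw [h] at hVfm
            have h1 : φ₁ ≠ 0 := by
              intro h0
              rw [hV1def, h0] at hVfm
              simp at hVfm
            rw [hV1def, V_term1 P h1 hθ] at hVfm
            have := WithTop.coe_injective hVfm
            exact hvfodd ⟨2 * P.v φ₁ + n, by omega⟩
          · exfalso
            have hle1 : V2 ≤ V1 := by
              rw [← h]
              exact ((min_le_left _ _).trans (min_le_left _ _)).trans (min_le_right _ _)
            have hle3 : V2 ≤ V3 := by
              rw [← h]
              exact min_le_right _ _
            exact absurd hcrit (not_lt.2 (le_min hle1 hle3))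
          · exfalso
            rw [h] at hVfm
            have h3 : φ₃ ≠ 0 := by
              intro h0
              rw [hV3def, h0] at hVfm
              simp at hVfm
            rw [hV3def, V_term P h3 hθ 3] at hVfm
            have := WithTop.coe_injective hVfm
            exact hvfodd ⟨2 * P.v φ₃ + 3 * n + 1, by omega⟩
        have hφ0ne : φ₀ ≠ 0 := by
          intro h0
          rw [hV0def, h0] at hattain
          simp at hattain
        have hvφ0 : P.v f = 4 * P.v φ₀ := by
          rw [hV0def, show (φ₀:K) ^ 4 = φ₀ ^ 4 * θ ^ 0 by ring, V_term P hφ0ne hθ 0]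
            at hattain
          have := WithTop.coe_injective hattain
          omega
        have hnum : f + φ₀ ^ 4 = (0:K) ^ 4 + φ₁ ^ 4 * θ + φ₂ ^ 4 * θ ^ 2 + φ₃ ^ 4 * θ ^ 3 := by
          rw [hfdef]
          linear_combination φ₀ ^ 4 * h2K
        have hVnum : V P (f + φ₀ ^ 4) = min V1 V3 := by
          rw [hnum, V_expansion P hθ ⟨n, hn⟩, ← hV1def, ← hV2def, ← hV3def,
            show V P ((0:K) ^ 4) = ⊤ by rw [show ((0:K) ^ 4) = 0 by norm_num, V_zero],
            min_eq_right le_top]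
          exact min3c _ _ _ hcrit.le
        have hnum_ne : f + φ₀ ^ 4 ≠ 0 := by
          rw [← V_lt_top_iff P, hVnum, hwmin]
          exact WithTop.coe_lt_top w
        have hvnum : P.v (f + φ₀ ^ 4) = w := by
          have := hVnum
          rw [V_of_ne P hnum_ne, hwmin] at this
          exact WithTop.coe_injective this
        have hden_ne : f * φ₀ ^ 4 ≠ 0 := mul_ne_zero hfne (pow_ne_zero _ hφ0ne)
        have hkey : f⁻¹ + (φ₀⁻¹) ^ 4 = (f + φ₀ ^ 4) / (f * φ₀ ^ 4) := by
          field_simp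
          ring
        refine ⟨f⁻¹, Or.inr ⟨hvf, rfl⟩, φ₀⁻¹, Or.inr ?_, ?_, ?_⟩
        · rw [v_inv P hφ0ne]
          omega
        · rw [hkey]
          exact div_ne_zero hnum_ne hden_ne
        · rw [hkey, v_div P hnum_ne hden_ne, hvnum,
            P.v_mul _ _ hfne (pow_ne_zero _ hφ0ne), v_pow P hφ0ne]
          obtain ⟨j, hj⟩ := hwodd
          push_cast
          exact ⟨j - 4 * P.v φ₀, by omega⟩

end CharTwo
end PT

namespace PT
open Polynomial IntermediateField

variable {k K : Type*} [Field k] [IsAlgClosed k] [Field K] [Algebra k K] (P : Place k K)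

/-- A sum of nonzero elements with pairwise distinct valuations is nonzero,
with valuation attained at one of them. -/
theorem sum_distinct_vals (s : Finset ℕ) (g : ℕ → K)
    (hne : ∀ i ∈ s, g i ≠ 0)
    (hdist : ∀ i ∈ s, ∀ j ∈ s, i ≠ j → P.v (g i) ≠ P.v (g j)) (hs : s.Nonempty) :
    ∃ j ∈ s, (∑ i ∈ s, g i) ≠ 0 ∧ P.v (∑ i ∈ s, g i) = P.v (g j) := by
  classical
  induction s using Finset.cons_induction with
  | empty => exact absurd hs (by simp)
  | cons a t hat ih =>
      rcases t.eq_empty_or_nonempty with rfl | htne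
      · exact ⟨a, by simp, by simpa using hne a (by simp), by simp⟩
      · obtain ⟨j, hjt, hsum_ne, hsum_v⟩ := ih (fun i hi => hne i (Finset.mem_cons_of_mem hi))
          (fun i hi j' hj' hij => hdist i (Finset.mem_cons_of_mem hi) j'
            (Finset.mem_cons_of_mem hj') hij) htne
        have hane : g a ≠ 0 := hne a (Finset.mem_cons_self a t)
        have haj : a ≠ j := fun h => hat (h ▸ hjt)
        have hdav : P.v (g a) ≠ P.v (∑ i ∈ t, g i) := by
          rw [hsum_v]
          exact hdist a (Finset.mem_cons_self a t) j (Finset.mem_cons_of_mem hjt) haj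
        have hdV : V P (g a) ≠ V P (∑ i ∈ t, g i) := by
          rw [V_of_ne P hane, V_of_ne P hsum_ne]
          exact fun h => hdav (WithTop.coe_injective h)
        have hVeq := V_add_eq P hdV
        have hcons : (∑ i ∈ Finset.cons a t hat, g i) = g a + ∑ i ∈ t, g i :=
          Finset.sum_cons hat
        have hne2 : (∑ i ∈ Finset.cons a t hat, g i) ≠ 0 := by
          rw [hcons, ← V_lt_top_iff P, hVeq]
          rcases min_choice (V P (g a)) (V P (∑ i ∈ t, g i)) with h | h <;> rw [h]
          · rw [V_of_ne P hane]; exact WithTop.coe_lt_top _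
          · rw [V_of_ne P hsum_ne]; exact WithTop.coe_lt_top _
        rw [hcons] at hne2 ⊢
        rcases min_choice (V P (g a)) (V P (∑ i ∈ t, g i)) with h | h <;> rw [h] at hVeq
        · refine ⟨a, Finset.mem_cons_self a t, hne2, ?_⟩
          rw [V_of_ne P hne2, V_of_ne P hane] at hVeq
          exact WithTop.coe_injective hVeq
        · refine ⟨j, Finset.mem_cons_of_mem hjt, hne2, ?_⟩
          rw [V_of_ne P hne2, V_of_ne P hsum_ne] at hVeq
          rw [WithTop.coe_injective hVeq, hsum_v]

/-- If `v (u - c) = 0` for every constant `c`, then `v` vanishes on `k[u] \ {0}`. -/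
theorem poly_flat {u : K}
    (hflat : ∀ c : k, u - algebraMap k K c ≠ 0 ∧ P.v (u - algebraMap k K c) = 0)
    (p : k[X]) (hp : p ≠ 0) : aeval u p ≠ 0 ∧ P.v (aeval u p) = 0 := by
  have hprod : ∀ s : Multiset k,
      (s.map fun a => u - algebraMap k K a).prod ≠ 0 ∧
      P.v (s.map fun a => u - algebraMap k K a).prod = 0 := by
    intro s
    induction s using Multiset.induction_on with
    | empty => exact ⟨by simp, by simpa using v_one P⟩
    | cons a t ihs =>
        rw [Multiset.map_cons, Multiset.prod_cons]
        refine ⟨mul_ne_zero (hflat a).1 ihs.1, ?_⟩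
        rw [P.v_mul _ _ (hflat a).1 ihs.1, (hflat a).2, ihs.2]
        norm_num
  have hcard : p.roots.card = p.natDegree :=
    (Polynomial.splits_iff_card_roots).1 (IsAlgClosed.splits p)
  have hfac := Polynomial.C_leadingCoeff_mul_prod_multiset_X_sub_C hcard
  have hlc : p.leadingCoeff ≠ 0 := Polynomial.leadingCoeff_ne_zero.2 hp
  have heval : aeval u p = algebraMap k K p.leadingCoeff *
      (p.roots.map fun a => u - algebraMap k K a).prod := by
    conv_lhs => rw [← hfac]
    rw [map_mul, aeval_C, map_multiset_prod, Multiset.map_map]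
    congr 1
    exact congrArg Multiset.prod (Multiset.map_congr rfl fun a _ => by
      simp only [Function.comp_apply, map_sub, aeval_X, aeval_C])
  have hlcK : algebraMap k K p.leadingCoeff ≠ 0 := fun h =>
    hlc ((_root_.map_eq_zero (algebraMap k K)).1 h)
  constructor
  · rw [heval]; exact mul_ne_zero hlcK (hprod p.roots).1
  · rw [heval, P.v_mul _ _ hlcK (hprod p.roots).1, P.v_const _ hlc, (hprod p.roots).2]
    norm_num

end PT
namespace PT
open Polynomial IntermediateField

variable {k K : Type*} [Field k] [IsAlgClosed k] [Field K] [Algebra k K] (P : Place k K)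

theorem residue_exists (hK : IsFunctionFieldOneVar k K) :
    ∀ u : K, u ≠ 0 → 0 ≤ P.v u → ∃ c : k, u - algebraMap k K c = 0 ∨
      (u - algebraMap k K c ≠ 0 ∧ 0 < P.v (u - algebraMap k K c)) := by
  intro u hu hvu
  by_contra hno
  have hflat : ∀ c : k, u - algebraMap k K c ≠ 0 ∧ P.v (u - algebraMap k K c) = 0 := by
    intro c
    have h1 : u - algebraMap k K c ≠ 0 := fun h => hno ⟨c, Or.inl h⟩
    have h2 : ¬ 0 < P.v (u - algebraMap k K c) := fun h => hno ⟨c, Or.inr ⟨h1, h⟩⟩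
    refine ⟨h1, le_antisymm (not_lt.1 h2) ?_⟩
    rcases eq_or_ne c 0 with rfl | hc
    · rw [map_zero, sub_zero]; exact hvu
    · have hcne : algebraMap k K c ≠ 0 := fun h => hc ((_root_.map_eq_zero _).1 h)
      have hadd := P.v_add u (-(algebraMap k K c)) hu (neg_ne_zero.2 hcne)
        (by rwa [← sub_eq_add_neg])
      rw [v_neg, P.v_const _ hc, ← sub_eq_add_neg] at hadd
      omega
  obtain ⟨x, hxtr, hfd⟩ := hK
  haveI := hfd
  haveI halgKx : Algebra.IsAlgebraic (adjoin k ({x} : Set K)) K :=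
    Algebra.IsAlgebraic.of_finite _ _
  have hutr : Transcendental k u := by
    rw [transcendental_iff]
    intro p hp
    by_contra hp0
    exact (poly_flat P hflat p hp0).1 hp
  classical
  -- exchange : x is algebraic over F := k⟮u⟯
  set F := adjoin k ({u} : Set K) with hFdef
  have hxalgF : IsAlgebraic F x := by
    obtain ⟨p, hp0, hpu⟩ := halgKx.isAlgebraic u
    have hrep : ∀ i : ℕ, ∃ r s : k[X], ((p.coeff i : K)) = aeval x r / aeval x s :=
      fun i => (mem_adjoin_simple_iff k _).1 (p.coeff i).2
    choose r s hrs using hrep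
    have hsnz : ∀ i ∈ p.support, aeval x (s i) ≠ 0 := by
      intro i hi h0
      apply Polynomial.mem_support_iff.1 hi
      have hz : (p.coeff i : K) = 0 := by rw [hrs i, h0, div_zero]
      exact_mod_cast hz
    have hrnz : ∀ i ∈ p.support, aeval x (r i) ≠ 0 := by
      intro i hi h0
      apply Polynomial.mem_support_iff.1 hi
      have hz : (p.coeff i : K) = 0 := by rw [hrs i, h0, zero_div]
      exact_mod_cast hz
    have hRval : ∀ i ∈ p.support,
        aeval x (r i * ∏ j ∈ p.support.erase i, s j) =
          (p.coeff i : K) * ∏ j ∈ p.support, aeval x (s j) := by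
      intro i hi
      rw [map_mul, map_prod, hrs i, ← Finset.mul_prod_erase _ _ hi]
      rw [div_mul_eq_mul_div]
      rw [mul_comm ((aeval x) (s i)) (∏ j ∈ p.support.erase i, (aeval x) (s j))]
      rw [← mul_assoc]
      rw [mul_div_cancel_right₀ _ (hsnz i hi)]
    have hsum : ∑ i ∈ p.support,
        aeval x (r i * ∏ j ∈ p.support.erase i, s j) * u ^ i = 0 := by
      have h0 : ∑ i ∈ p.support, (p.coeff i : K) * u ^ i = 0 := by
        have hh := hpu
        rw [Polynomial.aeval_def, Polynomial.eval₂_eq_sum, Polynomial.sum_def] at hh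
        exact hh
      calc ∑ i ∈ p.support, aeval x (r i * ∏ j ∈ p.support.erase i, s j) * u ^ i
          = ∑ i ∈ p.support,
              ((p.coeff i : K) * u ^ i) * ∏ j ∈ p.support, aeval x (s j) := by
            refine Finset.sum_congr rfl fun i hi => ?_
            rw [hRval i hi]; ring
        _ = (∑ i ∈ p.support, (p.coeff i : K) * u ^ i) *
              ∏ j ∈ p.support, aeval x (s j) := by rw [← Finset.sum_mul]
        _ = 0 := by rw [h0, zero_mul]
    have humem : u ∈ F := mem_adjoin_simple_self k u
    set uF : F := ⟨u, humem⟩ with huFdef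
    set R : ℕ → k[X] := fun i => r i * ∏ j ∈ p.support.erase i, s j with hRdef
    set T : Polynomial F :=
      ∑ i ∈ p.support, Polynomial.C (uF ^ i) * (R i).map (algebraMap k F) with hTdef
    have hTx : aeval x T = 0 := by
      rw [hTdef, map_sum]
      have : ∀ i ∈ p.support,
          aeval x (Polynomial.C (uF ^ i) * (R i).map (algebraMap k F)) =
            aeval x (R i) * u ^ i := by
        intro i hi
        rw [map_mul, aeval_C, aeval_map_algebraMap]
        have hcoe : (algebraMap F K) (uF ^ i) = u ^ i := by
          push_cast [huFdef]
          rfl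
        rw [hcoe]; ring
      rw [Finset.sum_congr rfl this]
      exact hsum
    obtain ⟨i₀, hi₀⟩ := Polynomial.support_nonempty.2 hp0
    have hRne : R i₀ ≠ 0 := by
      rw [hRdef]
      apply mul_ne_zero
      · exact fun h => hrnz i₀ hi₀ (by rw [h, map_zero])
      · exact Finset.prod_ne_zero_iff.2 fun j hj h =>
          hsnz j (Finset.mem_of_mem_erase hj) (by rw [h, map_zero])
    have hTne : T ≠ 0 := by
      intro hT0
      set d := (R i₀).natDegree with hddef
      have hcoeff : T.coeff d = ∑ i ∈ p.support, uF ^ i * algebraMap k F ((R i).coeff d) := by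
        rw [hTdef, Polynomial.finset_sum_coeff]
        refine Finset.sum_congr rfl fun i hi => ?_
        rw [Polynomial.coeff_C_mul, Polynomial.coeff_map]
      -- view it in K via transcendence of u
      set Q : k[X] := ∑ i ∈ p.support, Polynomial.C ((R i).coeff d) * Polynomial.X ^ i
        with hQdef
      have hQcoeff : Q.coeff i₀ = (R i₀).coeff d := by
        rw [hQdef, Polynomial.finset_sum_coeff]
        rw [Finset.sum_eq_single i₀]
        · rw [Polynomial.coeff_C_mul, Polynomial.coeff_X_pow, if_pos rfl, mul_one]
        · intro j hj hji
          rw [Polynomial.coeff_C_mul, Polynomial.coeff_X_pow, if_neg (Ne.symm hji), mul_zero]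
        · intro hni
          exact absurd hi₀ hni
      have hQne : Q ≠ 0 := by
        intro h0
        have : (R i₀).coeff d ≠ 0 := by
          rw [hddef]
          exact Polynomial.leadingCoeff_ne_zero.2 hRne
        apply this
        rw [← hQcoeff, h0, Polynomial.coeff_zero]
      have haQ : aeval u Q ≠ 0 := fun h => hQne (transcendental_iff.1 hutr Q h)
      apply haQ
      have hQu : aeval u Q = ∑ i ∈ p.support, algebraMap k K ((R i).coeff d) * u ^ i := by
        rw [hQdef, map_sum]
        refine Finset.sum_congr rfl fun i hi => ?_
        rw [map_mul, aeval_C, map_pow, aeval_X]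
      have hcK : ((T.coeff d : K)) = ∑ i ∈ p.support, u ^ i * algebraMap k K ((R i).coeff d) := by
        rw [hcoeff]
        push_cast
        refine Finset.sum_congr rfl fun i hi => ?_
        congr 1
      rw [hQu]
      have : ((T.coeff d : K)) = 0 := by rw [hT0, Polynomial.coeff_zero]; rfl
      rw [hcK] at this
      rw [← this]
      exact Finset.sum_congr rfl fun i hi => by ring
    exact ⟨T, hTne, hTx⟩
  -- K is algebraic over F
  haveI hfdE : FiniteDimensional F (adjoin F ({x} : Set K)) :=
    adjoin.finiteDimensional hxalgF.isIntegral
  haveI halgFE : Algebra.IsAlgebraic F (adjoin F ({x} : Set K)) :=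
    Algebra.IsAlgebraic.of_finite _ _
  haveI halgEK : Algebra.IsAlgebraic (adjoin F ({x} : Set K)) K := by
    set E := adjoin F ({x} : Set K) with hEdef
    have hsub : ∀ z : K, z ∈ adjoin k ({x} : Set K) → z ∈ E := by
      have hle : adjoin k ({x} : Set K) ≤ E.restrictScalars k := by
        apply IntermediateField.adjoin_le_iff.2
        intro z hz
        rcases hz with rfl
        exact mem_adjoin_simple_self F z
      exact fun z hz => hle hz
    set g : ↥(adjoin k ({x} : Set K)) →+* ↥E :=
      { toFun := fun z => ⟨z.1, hsub z.1 z.2⟩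
        map_one' := rfl
        map_mul' := fun _ _ => rfl
        map_zero' := rfl
        map_add' := fun _ _ => rfl } with hgdef
    have hginj : Function.Injective g := by
      intro a b hab
      have h' : (g a).1 = (g b).1 := congrArg Subtype.val hab
      exact Subtype.ext h'
    constructor
    intro y
    obtain ⟨p, hp0, hpy⟩ := halgKx.isAlgebraic y
    refine ⟨p.map g, (Polynomial.map_ne_zero_iff hginj).2 hp0, ?_⟩
    rw [Polynomial.aeval_def, Polynomial.eval₂_map]
    have hcomp : (algebraMap ↥E K).comp g = algebraMap ↥(adjoin k ({x} : Set K)) K :=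
      RingHom.ext fun c => rfl
    rw [hcomp, ← Polynomial.aeval_def]
    exact hpy
  haveI halgFK : Algebra.IsAlgebraic F K :=
    Algebra.IsAlgebraic.trans F (adjoin F ({x} : Set K)) K
  -- contradiction with surjectivity of v
  obtain ⟨y, hy0, hvy⟩ := P.v_surj 1
  obtain ⟨q, hq0, hqy⟩ := halgFK.isAlgebraic y
  have hFv : ∀ c : F, (c : K) ≠ 0 → P.v ((c : K)) = 0 := by
    intro c hc
    obtain ⟨rr, ss, hrs⟩ := (mem_adjoin_simple_iff k ((c : K))).1 c.2
    have hss : aeval u ss ≠ 0 := fun h => hc (by rw [hrs, h, div_zero])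
    have hssp : ss ≠ 0 := fun h => hss (by rw [h, map_zero])
    have hrr : rr ≠ 0 := fun h => hc (by rw [hrs, h, map_zero, zero_div])
    rw [hrs, v_div P (poly_flat P hflat rr hrr).1 hss, (poly_flat P hflat rr hrr).2,
      (poly_flat P hflat ss hssp).2]
    norm_num
  have hterm : ∀ i ∈ q.support, (algebraMap F K (q.coeff i) * y ^ i) ≠ 0 := by
    intro i hi
    exact mul_ne_zero (fun h => Polynomial.mem_support_iff.1 hi
      ((_root_.map_eq_zero _).1 h)) (pow_ne_zero _ hy0)
  have htermv : ∀ i ∈ q.support, P.v (algebraMap F K (q.coeff i) * y ^ i) = i := by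
    intro i hi
    have hcne : algebraMap F K (q.coeff i) ≠ 0 :=
      fun h => Polynomial.mem_support_iff.1 hi ((_root_.map_eq_zero _).1 h)
    rw [P.v_mul _ _ hcne (pow_ne_zero _ hy0), v_pow P hy0, hvy]
    have : P.v (algebraMap F K (q.coeff i)) = 0 := by
      apply hFv
      exact hcne
    rw [this]
    omega
  obtain ⟨j, hj, hsne, _⟩ := sum_distinct_vals P q.support
    (fun i => algebraMap F K (q.coeff i) * y ^ i) hterm
    (fun i hi j' hj' hij => by rw [htermv i hi, htermv j' hj']; exact_mod_cast hij)
    (Polynomial.support_nonempty.2 hq0)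
  apply hsne
  have hh := hqy
  rw [Polynomial.aeval_def, Polynomial.eval₂_eq_sum, Polynomial.sum_def] at hh
  exact hh

end PT

namespace PT
variable {k K : Type*} [Field k] [IsAlgClosed k] [Field K] [Algebra k K] (P : Place k K)

section CharTwo
variable [CharP K 2]

theorem translate4 (θ e q0 q1 q2 q3 : K) :
    q0 ^ 4 + q1 ^ 4 * (θ + e ^ 4) + q2 ^ 4 * (θ + e ^ 4) ^ 2 + q3 ^ 4 * (θ + e ^ 4) ^ 3 =
      (q0 + q1 * e + q2 * e ^ 2 + q3 * e ^ 3) ^ 4 + (q1 + q3 * e ^ 2) ^ 4 * θ +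
        (q2 + q3 * e) ^ 4 * θ ^ 2 + q3 ^ 4 * θ ^ 3 := by
  have hp0 : (q0 + q1 * e + q2 * e ^ 2 + q3 * e ^ 3) ^ 4 =
      q0 ^ 4 + (q1 * e) ^ 4 + (q2 * e ^ 2) ^ 4 + (q3 * e ^ 3) ^ 4 := by
    rw [add4, add4, add4]
  have hp1 : (q1 + q3 * e ^ 2) ^ 4 = q1 ^ 4 + (q3 * e ^ 2) ^ 4 := add4 _ _
  have hp2 : (q2 + q3 * e) ^ 4 = q2 ^ 4 + (q3 * e) ^ 4 := add4 _ _
  have hT2 : (θ + e ^ 4) ^ 2 = θ ^ 2 + e ^ 8 := by rw [CharTwo.add_sq]; ring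
  have hT3 : (θ + e ^ 4) ^ 3 = θ ^ 3 + θ ^ 2 * e ^ 4 + θ * e ^ 8 + e ^ 12 := by
    rw [show (θ + e ^ 4) ^ 3 = (θ + e ^ 4) ^ 2 * (θ + e ^ 4) by ring, hT2]; ring
  rw [hp0, hp1, hp2, hT2, hT3]
  ring

theorem translateB (h2K : (2:K) = 0) (θ e q1 q3 : K) :
    (q1 + q3 * e ^ 2) ^ 2 + q3 ^ 2 * θ = q1 ^ 2 + q3 ^ 2 * (θ + e ^ 4) := by
  rw [CharTwo.add_sq]; ring

theorem translateM (h2K : (2:K) = 0) (e q1 q2 q3 : K) :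
    (q2 + q3 * e) ^ 2 + (q1 + q3 * e ^ 2) * q3 = q2 ^ 2 + q1 * q3 := by
  rw [CharTwo.add_sq]
  linear_combination q3 ^ 2 * e ^ 2 * h2K

theorem aOf_eq (g f₁ f₂ f₃ : K) :
    aOf g f₁ f₂ f₃ = (f₂ ^ 2 + f₁ * f₃) ^ 2 * g / (f₁ ^ 2 + f₃ ^ 2 * g) ^ 2 := by
  simp only [aOf]
  rw [show (f₂ ^ 2 + f₁ * f₃) ^ 2 = f₁ ^ 2 * f₃ ^ 2 + f₂ ^ 4 from by rw [CharTwo.add_sq]; ring,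
    show (f₁ ^ 2 + f₃ ^ 2 * g) ^ 2 = f₃ ^ 4 * g ^ 2 + f₁ ^ 4 from by rw [CharTwo.add_sq]; ring]

/-- the main equivalence, for `f` expanded with respect to `θ + E⁴` where `v θ` is odd. -/
theorem main_case
    (hres : ∀ u : K, u ≠ 0 → 0 ≤ P.v u → ∃ c : k, u - algebraMap k K c = 0 ∨
        (u - algebraMap k K c ≠ 0 ∧ 0 < P.v (u - algebraMap k K c)))
    (θ E q0 q1 q2 q3 f a : K) (hθ : θ ≠ 0) (hN : Odd (P.v θ)) (hNpos : 0 < P.v θ)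
    (hB : q1 ^ 2 + q3 ^ 2 * (θ + E ^ 4) ≠ 0)
    (hf_eq : f = q0 ^ 4 + q1 ^ 4 * (θ + E ^ 4) + q2 ^ 4 * (θ + E ^ 4) ^ 2 +
      q3 ^ 4 * (θ + E ^ 4) ^ 3)
    (ha : a = (q2 ^ 2 + q1 * q3) ^ 2 * (θ + E ^ 4) / (q1 ^ 2 + q3 ^ 2 * (θ + E ^ 4)) ^ 2) :
    (∃ s : K, a + s ^ 2 = 0 ∨ 0 ≤ P.v (a + s ^ 2)) ↔ PseudoTameAt P f := by
  have h2K : (2 : K) = 0 := by exact_mod_cast CharP.cast_eq_zero K 2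
  have hBp : (q1 + q3 * E ^ 2) ^ 2 + q3 ^ 2 * θ ≠ 0 := by
    rw [translateB h2K]
    exact hB
  have hBpcond : ¬((q1 + q3 * E ^ 2) = 0 ∧ q3 = 0) := by
    rintro ⟨h1, h3⟩
    exact hBp (by rw [h1, h3]; ring)
  have hfθ : f = (q0 + q1 * E + q2 * E ^ 2 + q3 * E ^ 3) ^ 4 +
      (q1 + q3 * E ^ 2) ^ 4 * θ + (q2 + q3 * E) ^ 4 * θ ^ 2 + q3 ^ 4 * θ ^ 3 :=
    hf_eq.trans (translate4 θ E q0 q1 q2 q3)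
  have ha2 : a = θ * (((q2 + q3 * E) ^ 2 + (q1 + q3 * E ^ 2) * q3) /
        ((q1 + q3 * E ^ 2) ^ 2 + q3 ^ 2 * θ)) ^ 2 +
      (((q2 + q3 * E) ^ 2 + (q1 + q3 * E ^ 2) * q3) /
        ((q1 + q3 * E ^ 2) ^ 2 + q3 ^ 2 * θ) * E ^ 2) ^ 2 := by
    rw [ha, translateM h2K, translateB h2K]
    field_simp
  rw [hfθ, PT.lhs_iff P hθ hN ha2, ← PT.crit_iff P hθ hN hBpcond]
  exact (PT.pt_iff_core P hres hθ hN hNpos hBpcond).symm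

end CharTwo
end PT

/-- For `f, g ∈ H` with `g` pseudo-tame at a place `v`: the class of `a(f,g)`
modulo `K²` is regular at `v` if and only if `f` is pseudo-tame at `v`. -/
theorem a_regular_iff_pseudoTame
    (k K : Type*) [Field k] [IsAlgClosed k] [CharP k 2] [Field K] [Algebra k K]
    (hK : IsFunctionFieldOneVar k K) (P : Place k K)
    (f g : K) (hf : ∀ y : K, y ^ 2 ≠ f) (hg : ∀ y : K, y ^ 2 ≠ g)
    (hgpt : PseudoTameAt P g)
    (f₀ f₁ f₂ f₃ : K)
    (hexp : f = f₀ ^ 4 + f₁ ^ 4 * g + f₂ ^ 4 * g ^ 2 + f₃ ^ 4 * g ^ 3) :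
    (∃ s : K, aOf g f₁ f₂ f₃ + s ^ 2 = 0 ∨ 0 ≤ P.v (aOf g f₁ f₂ f₃ + s ^ 2)) ↔
      PseudoTameAt P f := by
  haveI : CharP K 2 := charP_of_injective_algebraMap (algebraMap k K).injective 2
  have h2K : (2 : K) = 0 := by exact_mod_cast CharP.cast_eq_zero K 2
  have hres := PT.residue_exists P hK
  have hgne : g ≠ 0 := by
    intro h0
    exact hg 0 (by rw [h0]; norm_num)
  have hBne : f₁ ^ 2 + f₃ ^ 2 * g ≠ 0 := by
    intro h0
    by_cases h3 : f₃ = 0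
    · have h1 : f₁ = 0 := by
        have hsq : f₁ ^ 2 = 0 := by rw [h3] at h0; linear_combination h0
        exact pow_eq_zero_iff (by norm_num) |>.1 hsq
      apply hf (f₀ ^ 2 + f₂ ^ 2 * g)
      rw [CharTwo.add_sq, hexp, h1, h3]
      ring
    · apply hg (f₁ / f₃)
      have hq : f₁ ^ 2 = f₃ ^ 2 * g := by
        rw [← CharTwo.neg_eq (f₃ ^ 2 * g)]; linear_combination h0
      rw [div_pow, hq, mul_comm, mul_div_assoc, div_self (pow_ne_zero _ h3), mul_one]
  obtain ⟨t, hbr, h, hho, hthne, hodd⟩ := hgpt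
  set θ := t + h ^ 4 with hθdef
  have hθne : θ ≠ 0 := hthne
  have hNodd : Odd (P.v θ) := hodd
  have hvtpos : 0 < P.v t ∧ t ≠ 0 := by
    rcases hbr with ⟨_, c, htc, htne2, hvt2⟩ | ⟨hvgneg, htinv⟩
    · exact ⟨hvt2, htne2⟩
    · have htne2 : t ≠ 0 := by rw [htinv]; exact inv_ne_zero hgne
      refine ⟨?_, htne2⟩
      rw [htinv, PT.v_inv P hgne]
      omega
  have hNpos : 0 < P.v θ := by
    obtain ⟨n, hn⟩ := hNodd
    rcases eq_or_ne h 0 with rfl | hh0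
    · have hθt : θ = t := by rw [hθdef]; norm_num
      rw [hθt]; exact hvtpos.1
    · have hhO : 0 ≤ P.v h := hho.resolve_left hh0
      have hmin := P.v_add t (h ^ 4) hvtpos.2 (pow_ne_zero _ hh0) hthne
      rw [PT.v_pow P hh0] at hmin
      have hvθ : P.v θ = P.v (t + h ^ 4) := by rw [hθdef]
      rw [← hvθ] at hmin
      push_cast at hmin
      have := hvtpos.1
      omega
  rcases hbr with ⟨hvg0, c, htc, htne2, hvt2⟩ | ⟨hvgneg, htinv⟩
  · -- case v g ≥ 0 : g = θ + ε⁴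
    obtain ⟨d, hd⟩ := IsAlgClosed.exists_pow_nat_eq c (n := 4) (by norm_num)
    have hε4 : (algebraMap k K d + h) ^ 4 = algebraMap k K c + h ^ 4 := by
      rw [PT.add4, ← map_pow, hd]
    have hgθ : g = θ + (algebraMap k K d + h) ^ 4 := by
      rw [hθdef, hε4, htc]
      linear_combination (-(h ^ 4) : K) * h2K
    refine PT.main_case P hres θ (algebraMap k K d + h) f₀ f₁ f₂ f₃ f
      (aOf g f₁ f₂ f₃) hθne hNodd hNpos ?_ ?_ ?_
    · rw [← hgθ]; exact hBne
    · rw [← hgθ]; exact hexp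
    · rw [← hgθ]; exact PT.aOf_eq g f₁ f₂ f₃
  · -- case v g < 0 : t = g⁻¹, t = θ + h⁴
    have hgt : g = t⁻¹ := by rw [htinv, inv_inv]
    have htθ : t = θ + h ^ 4 := by
      rw [hθdef]
      linear_combination (-(h ^ 4) : K) * h2K
    have htne2 : t ≠ 0 := hvtpos.2
    refine PT.main_case P hres θ h f₀ (f₃ / t) (f₂ / t) (f₁ / t) f
      (aOf g f₁ f₂ f₃) hθne hNodd hNpos ?_ ?_ ?_
    · rw [← htθ]
      intro h0
      apply hBne
      have hBt : f₁ ^ 2 + f₃ ^ 2 * g = t * ((f₃ / t) ^ 2 + (f₁ / t) ^ 2 * t) := by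
        rw [hgt]
        field_simp
        ring
      rw [hBt, h0, mul_zero]
    · rw [← htθ, hexp, hgt]
      field_simp
      ring
    · have hsplit : (f₁ ^ 2 * t + f₃ ^ 2) * t⁻¹ = f₁ ^ 2 + f₃ ^ 2 * t⁻¹ := by
        rw [add_mul, mul_assoc, mul_inv_cancel₀ htne2, mul_one]
      have hBt2 : f₁ ^ 2 * t + f₃ ^ 2 ≠ 0 := by
        intro h0
        apply hBne
        rw [hgt, ← hsplit, h0, zero_mul]
      have hmq : (f₂ / t) ^ 2 + (f₃ / t) * (f₁ / t) = (f₂ ^ 2 + f₁ * f₃) / t ^ 2 := by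
        field_simp
      have hBq : (f₃ / t) ^ 2 + (f₁ / t) ^ 2 * t = (f₁ ^ 2 + f₃ ^ 2 * g) / t := by
        rw [hgt]
        field_simp
        ring
      rw [← htθ, hmq, hBq, PT.aOf_eq g f₁ f₂ f₃,
        div_eq_div_iff (pow_ne_zero 2 hBne) (pow_ne_zero 2 (div_ne_zero hBne htne2))]
      rw [hgt]
      field_simp
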